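/- Let n : ℕ and let φ, ψ ∈ EuclideanSpace ℂ (Fin n) be unit vectors. Then (1/4) * ‖φ ⊗ ψ + ψ ⊗ φ‖^2 - (1/4) * ‖φ ⊗ ψ - ψ ⊗ φ‖^2 = ‖⟪φ, ψ⟫‖^2, i.e., the expected value of the Pauli-Z observable on the ancilla qubit of the swap test equals the fidelity |⟨φ|ψ⟩|². -/

import Mathlib

/-- The tensor product of two vectors in `EuclideanSpace ℂ (Fin n)`, given by
`(ψ ⊗ φ)(i, j) = ψ i * φ j`. -/
noncomputable def tensorProd {n : ℕ} (ψ φ : EuclideanSpace ℂ (Fin n)) :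
    EuclideanSpace ℂ (Fin n × Fin n) :=
  WithLp.toLp 2 (fun p : Fin n × Fin n => ψ p.1 * φ p.2)

lemma inner_tensorProd {n : ℕ} (a b c d : EuclideanSpace ℂ (Fin n)) :
    (inner ℂ (tensorProd a b) (tensorProd c d) : ℂ) = inner ℂ a c * inner ℂ b d := by
  simp only [EuclideanSpace.inner_eq_star_dotProduct]
  simp [dotProduct, tensorProd, Fintype.sum_prod_type, Finset.sum_mul,
    Finset.mul_sum, mul_mul_mul_comm]
  exact Finset.sum_comm

/-- The swap test computes the fidelity: for unit vectors `φ, ψ`, the expected value of the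
Pauli-`Z` observable on the ancilla, namely
`(1/4)‖φ⊗ψ + ψ⊗φ‖² - (1/4)‖φ⊗ψ - ψ⊗φ‖²`, equals `‖⟪φ, ψ⟫‖²`. -/
theorem swap_test_fidelity (n : ℕ) (φ ψ : EuclideanSpace ℂ (Fin n))
    (hφ : ‖φ‖ = 1) (hψ : ‖ψ‖ = 1) :
    (1 / 4 : ℝ) * ‖tensorProd φ ψ + tensorProd ψ φ‖ ^ 2
      - (1 / 4 : ℝ) * ‖tensorProd φ ψ - tensorProd ψ φ‖ ^ 2
      = ‖(inner ℂ φ ψ : ℂ)‖ ^ 2 := by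
  rw [norm_add_sq (𝕜 := ℂ), norm_sub_sq (𝕜 := ℂ)]
  have h : (inner ℂ (tensorProd φ ψ) (tensorProd ψ φ) : ℂ)
      = inner ℂ φ ψ * inner ℂ ψ φ := inner_tensorProd _ _ _ _
  have h2 : (inner ℂ φ ψ : ℂ) * inner ℂ ψ φ = (‖(inner ℂ φ ψ : ℂ)‖ : ℂ) ^ 2 := by
    rw [← inner_conj_symm ψ φ]
    rw [Complex.mul_conj']
  have h3 : RCLike.re (inner ℂ (tensorProd φ ψ) (tensorProd ψ φ) : ℂ)
      = ‖(inner ℂ φ ψ : ℂ)‖ ^ 2 := by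
    rw [h, h2]; norm_cast
  rw [h3]
  ring
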